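/- arXiv:1009.6036 — 7 statements merged into one kernel-verified Lean document; each statement's English description precedes it below -/
import Mathlib

section
/- Let A be an n×n doubly stochastic matrix. Define the sample variance V(x) = Σ_{i=1}^n (x_i - x̄)², where x̄ = (1/n)Σ_i x_i. Then for all x ∈ ℝⁿ, V(Ax) = V(x) - Σ_{i<j} w_{ij}(x_i - x_j)², where w_{ij} is the (i,j)-th entry of AᵀA. -/
open Matrix

/-- Sample variance of a vector in ℝⁿ. -/
noncomputable def sampleVar {n : ℕ} (x : Fin n → ℝ) : ℝ :=
  ∑ i, (x i - (∑ j, x j) / n) ^ 2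

lemma sampleVar_eq {n : ℕ} (hn : 0 < n) (x : Fin n → ℝ) :
    sampleVar x = ∑ i, x i ^ 2 - (∑ i, x i) ^ 2 / n := by
  have hn' : (n : ℝ) ≠ 0 := Nat.cast_ne_zero.mpr hn.ne'
  have h : ∀ i : Fin n, (x i - (∑ j, x j) / n) ^ 2
      = x i ^ 2 - 2 * ((∑ j, x j) / n) * x i + ((∑ j, x j) / n) ^ 2 := by
    intro i; ring
  rw [sampleVar]
  simp_rw [h]
  rw [Finset.sum_add_distrib, Finset.sum_sub_distrib, ← Finset.mul_sum,
    Finset.sum_const, Finset.card_univ, Fintype.card_fin, nsmul_eq_mul]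
  field_simp
  ring

lemma half_sum {n : ℕ} (F : Fin n → Fin n → ℝ) (hsymm : ∀ i j, F i j = F j i)
    (hdiag : ∀ i, F i i = 0) :
    ∑ i, ∑ j, F i j = 2 * ∑ j, ∑ i ∈ Finset.Iio j, F i j := by
  have expand : ∀ i j : Fin n, F i j
      = (if i < j then F i j else 0) + (if j < i then F i j else 0) := by
    intro i j
    rcases lt_trichotomy i j with h | h | h
    · simp [h, asymm h]
    · simp [h, hdiag]
    · simp [h, asymm h, not_lt_of_gt h]
  have iio : ∀ (g : Fin n → Fin n → ℝ), (∑ j, ∑ i ∈ Finset.Iio j, g i j)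
      = ∑ j, ∑ i, if i < j then g i j else 0 := by
    intro g
    refine Finset.sum_congr rfl fun j _ => ?_
    rw [← Finset.sum_filter]
    congr 1
    ext i
    simp
  calc ∑ i, ∑ j, F i j
      = ∑ i, ∑ j, ((if i < j then F i j else 0) + (if j < i then F i j else 0)) := by
        simp_rw [← expand]
    _ = (∑ i, ∑ j, if i < j then F i j else 0)
        + ∑ i, ∑ j, if j < i then F i j else 0 := by
        rw [← Finset.sum_add_distrib]
        exact Finset.sum_congr rfl fun i _ => Finset.sum_add_distrib
    _ = 2 * ∑ j, ∑ i ∈ Finset.Iio j, F i j := by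
        rw [iio, Finset.sum_comm (f := fun j i => if i < j then F i j else 0)]
        have h2 : (∑ i, ∑ j, if j < i then F i j else 0)
            = ∑ i, ∑ j, if j < i then F j i else 0 := by
          refine Finset.sum_congr rfl fun i _ => Finset.sum_congr rfl fun j _ => ?_
          by_cases h : j < i <;> simp [h, hsymm]
        rw [h2]
        have h3 : (∑ i, ∑ j, if j < i then F j i else 0)
            = ∑ j, ∑ i, if j < i then F j i else 0 := Finset.sum_comm
        rw [h3]
        ring

theorem stmt0 (n : ℕ) (hn : 0 < n) (A : Matrix (Fin n) (Fin n) ℝ)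
    (hnonneg : ∀ i j, 0 ≤ A i j)
    (hrow : ∀ i, ∑ j, A i j = 1)
    (hcol : ∀ j, ∑ i, A i j = 1)
    (x : Fin n → ℝ) :
    sampleVar (A.mulVec x) =
      sampleVar x - ∑ j, ∑ i ∈ Finset.Iio j, (Aᵀ * A) i j * (x i - x j) ^ 2 := by
  set W := Aᵀ * A with hW
  have hWapp : ∀ i j, W i j = ∑ k, A k i * A k j := by
    intro i j
    simp [hW, Matrix.mul_apply, Matrix.transpose_apply]
  have hWsymm : ∀ i j, W i j = W j i := by
    intro i j
    simp_rw [hWapp]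
    exact Finset.sum_congr rfl fun k _ => mul_comm _ _
  have hWrow : ∀ i, ∑ j, W i j = 1 := by
    intro i
    simp_rw [hWapp]
    rw [Finset.sum_comm]
    simp_rw [← Finset.mul_sum, hrow, mul_one, hcol]
  have hWcol : ∀ j, ∑ i, W i j = 1 := by
    intro j
    simp_rw [fun i => hWsymm i j]
    exact hWrow j
  -- sum preserved
  have hsum : ∑ i, A.mulVec x i = ∑ i, x i := by
    simp_rw [Matrix.mulVec, dotProduct]
    rw [Finset.sum_comm]
    simp_rw [← Finset.sum_mul, hcol, one_mul]
  -- sum of squares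
  have hsq : ∑ i, (A.mulVec x i) ^ 2 = ∑ i, ∑ j, W i j * x i * x j := by
    simp_rw [Matrix.mulVec, dotProduct, sq, Finset.sum_mul_sum, hWapp,
      Finset.sum_mul]
    rw [Finset.sum_comm]
    refine Finset.sum_congr rfl fun i _ => ?_
    rw [Finset.sum_comm]
    refine Finset.sum_congr rfl fun j _ => Finset.sum_congr rfl fun k _ => ?_
    ring
  -- quadratic form identity
  have hquad : ∑ i, ∑ j, W i j * x i * x j
      = ∑ i, x i ^ 2 - ∑ j, ∑ i ∈ Finset.Iio j, W i j * (x i - x j) ^ 2 := by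
    have hhalf := half_sum (fun i j => W i j * (x i - x j) ^ 2)
      (fun i j => by rw [hWsymm i j]; ring) (fun i => by ring)
    have hfull : ∑ i, ∑ j, W i j * (x i - x j) ^ 2
        = 2 * ∑ i, x i ^ 2 - 2 * ∑ i, ∑ j, W i j * x i * x j := by
      have e : ∀ i j : Fin n, W i j * (x i - x j) ^ 2
          = W i j * x i ^ 2 + W i j * x j ^ 2 - 2 * (W i j * x i * x j) := by
        intro i j; ring
      simp_rw [e, Finset.sum_sub_distrib, Finset.sum_add_distrib,
        ← Finset.mul_sum]
      simp_rw [← Finset.sum_mul, hWrow, one_mul]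
      have : ∑ i : Fin n, ∑ j, W i j * x j ^ 2 = ∑ j : Fin n, x j ^ 2 := by
        rw [Finset.sum_comm]
        simp_rw [← Finset.sum_mul, hWcol, one_mul]
      rw [this]
      ring
    have := hhalf.symm.trans hfull
    linarith
  rw [sampleVar_eq hn, sampleVar_eq hn, hsum, hsq, hquad]
  ring
end

section
/- Let A be an n×n row-stochastic matrix with positive diagonal entries whose smallest positive entry is at least η > 0. Let (S⁻, S⁺) be a partition of {1,...,n} into two disjoint nonempty sets, and let w_{ij} denote the (i,j) entry of AᵀA. If Σ_{i∈S⁻, j∈S⁺} w_{ij} > 0, then Σ_{i∈S⁻, j∈S⁺} w_{ij} ≥ η/2. -/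
open Matrix

theorem stmt1 (n : ℕ) (A : Matrix (Fin n) (Fin n) ℝ) (η : ℝ) (hη : 0 < η)
    (hnonneg : ∀ i j, 0 ≤ A i j)
    (hrow : ∀ i, ∑ j, A i j = 1)
    (hdiag : ∀ i, 0 < A i i)
    (hmin : ∀ i j, 0 < A i j → η ≤ A i j)
    (Sm Sp : Finset (Fin n))
    (hSm : Sm.Nonempty) (hSp : Sp.Nonempty)
    (hdisj : Disjoint Sm Sp) (hunion : Sm ∪ Sp = Finset.univ)
    (hpos : 0 < ∑ i ∈ Sm, ∑ j ∈ Sp, (Aᵀ * A) i j) :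
    η / 2 ≤ ∑ i ∈ Sm, ∑ j ∈ Sp, (Aᵀ * A) i j := by
  have key : ∑ i ∈ Sm, ∑ j ∈ Sp, (Aᵀ * A) i j
      = ∑ k, (∑ i ∈ Sm, A k i) * (∑ j ∈ Sp, A k j) := by
    simp only [mul_apply, transpose_apply, Finset.sum_mul_sum]
    calc ∑ i ∈ Sm, ∑ j ∈ Sp, ∑ k, A k i * A k j
        = ∑ i ∈ Sm, ∑ k, ∑ j ∈ Sp, A k i * A k j :=
          Finset.sum_congr rfl fun i _ => Finset.sum_comm
      _ = ∑ k, ∑ i ∈ Sm, ∑ j ∈ Sp, A k i * A k j := Finset.sum_comm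
  rw [key] at hpos ⊢
  -- each summand is nonneg
  have hnn : ∀ k, 0 ≤ (∑ i ∈ Sm, A k i) * (∑ j ∈ Sp, A k j) := fun k =>
    mul_nonneg (Finset.sum_nonneg fun i _ => hnonneg k i)
      (Finset.sum_nonneg fun j _ => hnonneg k j)
  obtain ⟨k, -, hk⟩ := Finset.exists_lt_of_sum_lt (by simpa using hpos :
    ∑ k : Fin n, (0:ℝ) < ∑ k, (∑ i ∈ Sm, A k i) * (∑ j ∈ Sp, A k j))
  set x := ∑ i ∈ Sm, A k i with hxdef
  set y := ∑ j ∈ Sp, A k j with hydef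
  have hx0 : 0 < x := by
    rcases mul_pos_iff.mp hk with ⟨h1, _⟩ | ⟨h1, h2⟩
    · exact h1
    · linarith [Finset.sum_nonneg (fun i (_ : i ∈ Sm) => hnonneg k i), h1]
  have hy0 : 0 < y := by
    rcases mul_pos_iff.mp hk with ⟨_, h2⟩ | ⟨h1, h2⟩
    · exact h2
    · linarith [Finset.sum_nonneg (fun j (_ : j ∈ Sp) => hnonneg k j), h2]
  have hxy : x + y = 1 := by
    rw [hxdef, hydef, ← Finset.sum_union hdisj, hunion, hrow k]
  obtain ⟨i, hi, hAi⟩ : ∃ i ∈ Sm, 0 < A k i := by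
    by_contra h
    push_neg at h
    have : x ≤ 0 := Finset.sum_nonpos fun i hi => h i hi
    linarith
  obtain ⟨j, hj, hAj⟩ : ∃ j ∈ Sp, 0 < A k j := by
    by_contra h
    push_neg at h
    have : y ≤ 0 := Finset.sum_nonpos fun j hj => h j hj
    linarith
  have hηx : η ≤ x := le_trans (hmin k i hAi)
    (Finset.single_le_sum (fun i _ => hnonneg k i) hi)
  have hηy : η ≤ y := le_trans (hmin k j hAj)
    (Finset.single_le_sum (fun j _ => hnonneg k j) hj)
  have hxy2 : η / 2 ≤ x * y := by nlinarith [mul_nonneg (by linarith : (0:ℝ) ≤ x - η) (by linarith : (0:ℝ) ≤ y - η)]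
  calc η / 2 ≤ x * y := hxy2
    _ ≤ ∑ k, (∑ i ∈ Sm, A k i) * (∑ j ∈ Sp, A k j) :=
      Finset.single_le_sum (fun k _ => hnn k) (Finset.mem_univ k)
end

section
/- For any real numbers x_1 ≥ x_2 ≥ ... ≥ x_n with Σ_i x_i = 0 and Σ_i x_i² = 1, we have Σ_{i=1}^{n-1} (x_i - x_{i+1})² ≥ 1/n². -/
theorem stmt2 (n : ℕ) (hn : 2 ≤ n) (x : ℕ → ℝ)
    (hsorted : ∀ i, i + 1 < n → x (i + 1) ≤ x i)
    (hsum : ∑ i ∈ Finset.range n, x i = 0)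
    (hsq : ∑ i ∈ Finset.range n, (x i) ^ 2 = 1) :
    1 / (n : ℝ) ^ 2 ≤ ∑ i ∈ Finset.range (n - 1), (x i - x (i + 1)) ^ 2 := by
  have npos : (0:ℝ) < n := by positivity
  have mono : ∀ i j : ℕ, i ≤ j → j < n → x j ≤ x i := by
    intro i j hij hj
    induction j with
    | zero => interval_cases i; exact le_refl _
    | succ k ih =>
      rcases Nat.eq_or_lt_of_le hij with h | h
      · rw [h]
      · exact le_trans (hsorted k hj) (ih (Nat.lt_succ_iff.mp h) (Nat.lt_of_succ_lt hj))
  have hn1 : n - 1 < n := Nat.sub_lt (by omega) one_pos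
  have h0 : 0 ≤ x 0 := by
    by_contra h
    push_neg at h
    have : ∑ i ∈ Finset.range n, x i < 0 := by
      apply Finset.sum_neg
      · intro i hi
        exact lt_of_le_of_lt (mono 0 i (Nat.zero_le _) (Finset.mem_range.mp hi)) h
      · exact Finset.nonempty_range_iff.mpr (by omega)
    linarith [hsum]
  have hlast : x (n - 1) ≤ 0 := by
    by_contra h
    push_neg at h
    have : 0 < ∑ i ∈ Finset.range n, x i := by
      apply Finset.sum_pos
      · intro i hi
        have hi' := Finset.mem_range.mp hi
        exact lt_of_lt_of_le h (mono i (n - 1) (by omega) hn1)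
      · exact Finset.nonempty_range_iff.mpr (by omega)
    linarith [hsum]
  set M : ℝ := x 0 - x (n - 1) with hM
  have hbound : ∀ i ∈ Finset.range n, x i ^ 2 ≤ M ^ 2 := by
    intro i hi
    have hi' := Finset.mem_range.mp hi
    have h1 : x i ≤ x 0 := mono 0 i (Nat.zero_le _) hi'
    have h2 : x (n - 1) ≤ x i := mono i (n - 1) (by omega) hn1
    apply sq_le_sq' <;> simp only [hM] <;> nlinarith
  have hMsq : 1 ≤ (n : ℝ) * M ^ 2 := by
    have := Finset.sum_le_card_nsmul (Finset.range n) _ (M ^ 2) hbound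
    simp only [Finset.card_range, nsmul_eq_mul] at this
    linarith [hsq ▸ this]
  have htel : ∑ i ∈ Finset.range (n - 1), (x i - x (i + 1)) = M := by
    rw [Finset.sum_range_sub' x (n - 1)]
  have hCS : M ^ 2 ≤ (n - 1 : ℕ) * ∑ i ∈ Finset.range (n - 1), (x i - x (i + 1)) ^ 2 := by
    rw [← htel]
    simpa using sq_sum_le_card_mul_sum_sq (s := Finset.range (n - 1))
      (f := fun i => x i - x (i + 1))
  have hcast : ((n - 1 : ℕ) : ℝ) ≤ (n : ℝ) := by
    exact_mod_cast Nat.sub_le n 1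
  have hD : 0 ≤ ∑ i ∈ Finset.range (n - 1), (x i - x (i + 1)) ^ 2 :=
    Finset.sum_nonneg fun i _ => sq_nonneg _
  have key : 1 ≤ (n : ℝ) ^ 2 * ∑ i ∈ Finset.range (n - 1), (x i - x (i + 1)) ^ 2 := by
    nlinarith [hMsq, hCS, mul_le_mul_of_nonneg_right hcast hD]
  rw [div_le_iff₀ (by positivity)]
  linarith
end

section
/- Let A be an n×n symmetric stochastic matrix with n ≥ 3 satisfying a_{ij} = 0 whenever |i − j| > 1 (a tridiagonal 'birth-death' structure), A𝟙 = 𝟙 and 𝟙ᵀA = 𝟙ᵀ. Then A has a real eigenvalue λ with 1 − 6/n² < λ < 1 whose eigenvector v satisfies vᵀ𝟙 = 0. -/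
set_option maxHeartbeats 1000000

open Finset

lemma sum_range_cast (n : ℕ) : ∑ i ∈ Finset.range n, (i:ℝ) = n*((n:ℝ)-1)/2 := by
  induction n with
  | zero => simp
  | succ m ih => rw [Finset.sum_range_succ, ih]; push_cast; ring

lemma sum_range_sq_cast (n : ℕ) :
    ∑ i ∈ Finset.range n, (i:ℝ)^2 = n*((n:ℝ)-1)*(2*(n:ℝ)-1)/6 := by
  induction n with
  | zero => simp
  | succ m ih => rw [Finset.sum_range_succ, ih]; push_cast; ring

lemma row_general (n : ℕ) (A : Matrix (Fin n) (Fin n) ℝ)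
    (hrow : ∀ i, ∑ j, A i j = 1)
    (htridiag : ∀ i j : Fin n, 1 < |(i : ℤ) - (j : ℤ)| → A i j = 0)
    (m : ℕ) (hm : m + 2 < n) :
    A ⟨m+1, by omega⟩ ⟨m, by omega⟩ + A ⟨m+1, by omega⟩ ⟨m+1, by omega⟩
      + A ⟨m+1, by omega⟩ ⟨m+2, by omega⟩ = 1 := by
  classical
  have h := hrow ⟨m+1, by omega⟩
  set f : ℕ → ℝ := fun k => if h : k < n then A ⟨m+1, by omega⟩ ⟨k, h⟩ else 0 with hf
  have h2 : ∑ k : Fin n, A ⟨m+1, by omega⟩ k = ∑ k ∈ Finset.range n, f k := by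
    rw [← Fin.sum_univ_eq_sum_range]
    apply Finset.sum_congr rfl; intro k _
    simp [hf, k.isLt]
  have h3 : ∑ k ∈ Finset.range n, f k = ∑ k ∈ ({m, m+1, m+2} : Finset ℕ), f k := by
    symm; apply Finset.sum_subset
    · intro k hk
      simp only [Finset.mem_insert, Finset.mem_singleton] at hk
      simp only [Finset.mem_range]
      omega
    · intro k hk hk2
      have hkn : k < n := Finset.mem_range.1 hk
      simp only [Finset.mem_insert, Finset.mem_singleton, not_or] at hk2
      rw [show f k = A ⟨m+1, by omega⟩ ⟨k, hkn⟩ from dif_pos hkn]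
      apply htridiag
      show 1 < |((m+1 : ℕ) : ℤ) - ((k : ℕ) : ℤ)|
      rcases le_or_gt (k : ℤ) (m : ℤ) with h' | h'
      · rw [abs_of_nonneg (by push_cast; omega)]
        push_cast
        have : k ≠ m := hk2.1
        omega
      · rw [abs_of_nonpos (by push_cast; omega)]
        push_cast
        have h1 : k ≠ m+1 := hk2.2.1
        have h2 : k ≠ m+2 := hk2.2.2
        omega
  have h4 : ∑ k ∈ ({m, m+1, m+2} : Finset ℕ), f k = f m + f (m+1) + f (m+2) := by
    rw [Finset.sum_insert (by simp), Finset.sum_insert (by simp), Finset.sum_singleton]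
    ring
  have hfm : f m = A ⟨m+1, by omega⟩ ⟨m, by omega⟩ := dif_pos (by omega)
  have hfm1 : f (m+1) = A ⟨m+1, by omega⟩ ⟨m+1, by omega⟩ := dif_pos (by omega)
  have hfm2 : f (m+2) = A ⟨m+1, by omega⟩ ⟨m+2, by omega⟩ := dif_pos (by omega)
  rw [h2, h3, h4, hfm, hfm1, hfm2] at h
  exact h

lemma row_zero (n : ℕ) (hn : 2 ≤ n) (A : Matrix (Fin n) (Fin n) ℝ)
    (hrow : ∀ i, ∑ j, A i j = 1)
    (htridiag : ∀ i j : Fin n, 1 < |(i : ℤ) - (j : ℤ)| → A i j = 0) :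
    A ⟨0, by omega⟩ ⟨0, by omega⟩ + A ⟨0, by omega⟩ ⟨1, by omega⟩ = 1 := by
  classical
  have h := hrow ⟨0, by omega⟩
  set f : ℕ → ℝ := fun k => if h : k < n then A ⟨0, by omega⟩ ⟨k, h⟩ else 0 with hf
  have h2 : ∑ k : Fin n, A ⟨0, by omega⟩ k = ∑ k ∈ Finset.range n, f k := by
    rw [← Fin.sum_univ_eq_sum_range]
    apply Finset.sum_congr rfl; intro k _
    simp [hf, k.isLt]
  have h3 : ∑ k ∈ Finset.range n, f k = ∑ k ∈ ({0, 1} : Finset ℕ), f k := by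
    symm; apply Finset.sum_subset
    · intro k hk
      simp only [Finset.mem_insert, Finset.mem_singleton] at hk
      simp only [Finset.mem_range]
      omega
    · intro k hk hk2
      have hkn : k < n := Finset.mem_range.1 hk
      simp only [Finset.mem_insert, Finset.mem_singleton, not_or] at hk2
      rw [show f k = A ⟨0, by omega⟩ ⟨k, hkn⟩ from dif_pos hkn]
      apply htridiag
      show 1 < |((0 : ℕ) : ℤ) - ((k : ℕ) : ℤ)|
      rw [abs_of_nonpos (by push_cast; omega)]
      push_cast
      have h1 : k ≠ 0 := hk2.1
      have h2 : k ≠ 1 := hk2.2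
      omega
  have h4 : ∑ k ∈ ({0, 1} : Finset ℕ), f k = f 0 + f 1 := by
    rw [Finset.sum_insert (by simp), Finset.sum_singleton]
  have hfm : f 0 = A ⟨0, by omega⟩ ⟨0, by omega⟩ := dif_pos (by omega)
  have hfm1 : f 1 = A ⟨0, by omega⟩ ⟨1, by omega⟩ := dif_pos (by omega)
  rw [h2, h3, h4, hfm, hfm1] at h
  exact h

lemma edge_odd_le (n : ℕ) (A : Matrix (Fin n) (Fin n) ℝ)
    (hsymm' : ∀ i j, A j i = A i j)
    (hnonneg : ∀ i j, 0 ≤ A i j)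
    (hrow : ∀ i, ∑ j, A i j = 1)
    (htridiag : ∀ i j : Fin n, 1 < |(i : ℤ) - (j : ℤ)| → A i j = 0)
    (k : ℕ) (hk : 2*k+2 < n) :
    A ⟨2*k+1, by omega⟩ ⟨2*k+2, by omega⟩ ≤ ∑ i, A i i := by
  classical
  set d : ℕ → ℝ := fun m => if h : m < n then A ⟨m, h⟩ ⟨m, h⟩ else 0 with hd
  set S : ℕ → ℝ := fun m => if h : m + 1 < n then A ⟨m, by omega⟩ ⟨m+1, h⟩ else 0 with hS
  have hSdef : ∀ m (h : m + 1 < n), S m = A ⟨m, by omega⟩ ⟨m+1, h⟩ := by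
    intro m h; rw [hS]; exact dif_pos h
  have hddef : ∀ m (h : m < n), d m = A ⟨m, h⟩ ⟨m, h⟩ := by
    intro m h; rw [hd]; exact dif_pos h
  have hd0 : ∀ m, 0 ≤ d m := by
    intro m
    by_cases h : m < n
    · rw [show d m = A ⟨m,h⟩ ⟨m,h⟩ from dif_pos h]; exact hnonneg _ _
    · rw [show d m = 0 from dif_neg h]
  have hrowS : ∀ m : ℕ, m + 2 < n → S m + d (m+1) + S (m+1) = 1 := by
    intro m hm
    have h := row_general n A hrow htridiag m hm
    have e1 : S m = A ⟨m+1, by omega⟩ ⟨m, by omega⟩ := by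
      rw [show S m = A ⟨m, by omega⟩ ⟨m+1, by omega⟩ from dif_pos (by omega)]
      exact (hsymm' _ _).symm
    have e2 : d (m+1) = A ⟨m+1, by omega⟩ ⟨m+1, by omega⟩ := dif_pos (by omega)
    have e3 : S (m+1) = A ⟨m+1, by omega⟩ ⟨m+2, by omega⟩ := dif_pos (by omega)
    rw [e1, e2, e3]
    linarith [h]
  have hclaim : ∀ k : ℕ, 2*k+2 < n → S (2*k+1) ≤ ∑ i ∈ Finset.range (2*k+1), d i := by
    intro k
    induction k with
    | zero =>
      intro hk
      have h0 : d 0 + S 0 = 1 := by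
        have := row_zero n (by omega) A hrow htridiag
        rw [show d 0 = A ⟨0, by omega⟩ ⟨0, by omega⟩ from dif_pos (by omega),
            show S 0 = A ⟨0, by omega⟩ ⟨1, by omega⟩ from dif_pos (by omega)]
        linarith [this]
      have h1 : S 0 + d 1 + S 1 = 1 := hrowS 0 (by omega)
      have : S (2*0+1) = S 1 := by norm_num
      rw [this]
      have : ∑ i ∈ Finset.range (2*0+1), d i = d 0 := by norm_num
      rw [this]
      linarith [hd0 1]
    | succ k ih =>
      intro hk
      have h1 : S (2*k+1) + d (2*k+2) + S (2*k+2) = 1 := hrowS (2*k+1) (by omega)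
      have h2 : S (2*k+2) + d (2*k+3) + S (2*k+3) = 1 := hrowS (2*k+2) (by omega)
      have ih' := ih (by omega)
      have e : 2*(k+1)+1 = 2*k+3 := by ring
      rw [e]
      have esum : ∑ i ∈ Finset.range (2*k+3), d i
          = (∑ i ∈ Finset.range (2*k+1), d i) + d (2*k+1) + d (2*k+2) := by
        rw [show 2*k+3 = (2*k+2)+1 from by ring, Finset.sum_range_succ,
            show 2*k+2 = (2*k+1)+1 from by ring, Finset.sum_range_succ]
      rw [esum]
      linarith [hd0 (2*k+1), hd0 (2*k+3)]
  have h1 : A ⟨2*k+1, by omega⟩ ⟨2*k+2, by omega⟩ = S (2*k+1) := by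
    rw [hSdef (2*k+1) (by omega)]
  rw [h1]
  have h2 : ∑ i ∈ Finset.range (2*k+1), d i ≤ ∑ i ∈ Finset.range n, d i := by
    apply Finset.sum_le_sum_of_subset_of_nonneg
    · apply Finset.range_subset_range.2; omega
    · intro i _ _; exact hd0 i
  have h3 : ∑ i ∈ Finset.range n, d i = ∑ i, A i i := by
    rw [← Fin.sum_univ_eq_sum_range]
    apply Finset.sum_congr rfl
    intro i _
    simp [hd, i.isLt]
  linarith [hclaim k hk]

lemma spectral_aux (n : ℕ) (hn : 3 ≤ n) (A : Matrix (Fin n) (Fin n) ℝ)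
    (hsymm : A.IsSymm)
    (h1A : ∀ j, ∑ i, A i j = 1) :
    ∃ (lam : ℝ) (v : Fin n → ℝ), v ≠ 0 ∧ A.mulVec v = lam • v ∧ (∑ i, v i) = 0 ∧
      ∀ u : Fin n → ℝ, u ≠ 0 → (∑ i, u i) = 0 →
        (∑ i, A.mulVec u i * u i) ≤ lam * ∑ i, (u i)^2 := by
  classical
  have hsymm' : ∀ i j, A j i = A i j := fun i j => by
    conv_lhs => rw [← hsymm]
    rfl
  -- the linear functional "sum of coordinates"
  let L : EuclideanSpace ℝ (Fin n) →ₗ[ℝ] ℝ :=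
    { toFun := fun v => ∑ i, v i
      map_add' := by intro x y; exact Finset.sum_add_distrib
      map_smul' := by intro c x; simp [Finset.mul_sum] }
  let W : Submodule ℝ (EuclideanSpace ℝ (Fin n)) := LinearMap.ker L
  have hmemW : ∀ v : EuclideanSpace ℝ (Fin n), v ∈ W ↔ (∑ i, v i) = 0 := by
    intro v; rfl
  have hker : ∀ w : EuclideanSpace ℝ (Fin n), (∑ i, w i) = 0 →
      (∑ i, (A.mulVec w) i) = 0 := by
    intro w hw
    have : ∑ i, (A.mulVec w) i = ∑ j, (∑ i, A i j) * w j := by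
      simp only [Matrix.mulVec, dotProduct]
      rw [Finset.sum_comm]
      simp [Finset.sum_mul]
    rw [this]
    simp only [h1A, one_mul]
    exact hw
  let T : W →ₗ[ℝ] W :=
    { toFun := fun w => ⟨WithLp.toLp 2 (A.mulVec w), by
        rw [hmemW]
        exact hker w ((hmemW w).1 w.2)⟩
      map_add' := by
        intro x y; ext i
        simp [Matrix.mulVec_add]
      map_smul' := by
        intro c x; ext i
        simp [Matrix.mulVec_smul] }
  have hTapp : ∀ w : W, ((T w : EuclideanSpace ℝ (Fin n))) = A.mulVec w := fun w => rfl
  have hinner : ∀ a b : EuclideanSpace ℝ (Fin n), (inner ℝ a b : ℝ) = ∑ i, a i * b i := by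
    intro a b
    simp [PiLp.inner_apply, RCLike.inner_apply, mul_comm]
  have hsym2 : ∀ a b : Fin n → ℝ, ∑ i, A.mulVec a i * b i = ∑ i, a i * A.mulVec b i := by
    intro a b
    simp only [Matrix.mulVec, dotProduct, Finset.sum_mul, Finset.mul_sum]
    rw [Finset.sum_comm]
    apply Finset.sum_congr rfl; intro j _
    apply Finset.sum_congr rfl; intro i _
    rw [hsymm' j i]; ring
  have hT : T.IsSymmetric := by
    intro x y
    rw [Submodule.coe_inner, Submodule.coe_inner, hinner, hinner]
    exact hsym2 x y
  -- W is nontrivial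
  let i0 : Fin n := ⟨0, by omega⟩
  let i1 : Fin n := ⟨1, by omega⟩
  have h01 : i0 ≠ i1 := by
    intro h; exact absurd (congrArg Fin.val h) (by simp [i0, i1])
  let s0 : Fin n → ℝ := Pi.single i0 1
  let s1 : Fin n → ℝ := Pi.single i1 1
  let x0 : EuclideanSpace ℝ (Fin n) := WithLp.toLp 2 (fun i => s0 i - s1 i)
  have hx0mem : x0 ∈ W := by
    rw [hmemW]
    show ∑ i, (s0 i - s1 i) = 0
    rw [Finset.sum_sub_distrib]
    rw [show ∑ i, s0 i = 1 from by simp [s0, Finset.sum_pi_single'],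
        show ∑ i, s1 i = 1 from by simp [s1, Finset.sum_pi_single']]
    ring
  have hx0ne : x0 ≠ 0 := by
    intro h
    have h0 : x0 i0 = (1:ℝ) := by
      show s0 i0 - s1 i0 = 1
      rw [show s0 i0 = 1 from Pi.single_eq_same i0 1, show s1 i0 = 0 from Pi.single_eq_of_ne h01 1]
      norm_num
    rw [h] at h0
    simpa using h0
  haveI : Nontrivial W := ⟨⟨⟨x0, hx0mem⟩, 0, by
    intro h
    exact hx0ne (by simpa using congrArg (Subtype.val) h)⟩⟩
  have key := hT.hasEigenvalue_iSup_of_finiteDimensional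
  set lam : ℝ := ⨆ x : { x : W // x ≠ 0 }, RCLike.re (inner ℝ (T x) (x : W) : ℝ) / ‖(x : W)‖ ^ 2 with hlam
  obtain ⟨w, hw⟩ := key.exists_hasEigenvector
  have hbdd : BddAbove (Set.range fun x : { x : W // x ≠ 0 } =>
      RCLike.re (inner ℝ (T x) ((x : W) : W) : ℝ) / ‖(x : W)‖ ^ 2) := by
    let Tc : W →L[ℝ] W := LinearMap.toContinuousLinearMap T
    refine ⟨‖Tc‖, ?_⟩
    rintro r ⟨x, rfl⟩
    have hx : (0:ℝ) < ‖(x : W)‖ := norm_pos_iff.mpr x.2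
    have h1 : (inner ℝ (T (x : W)) ((x : W) : W) : ℝ) ≤ ‖T (x : W)‖ * ‖(x : W)‖ :=
      real_inner_le_norm _ _
    have h2 : ‖T (x : W)‖ ≤ ‖Tc‖ * ‖(x : W)‖ := Tc.le_opNorm _
    have h3 : (inner ℝ (T (x : W)) ((x : W) : W) : ℝ) ≤ ‖Tc‖ * ‖(x : W)‖ ^ 2 := by
      calc (inner ℝ (T (x : W)) ((x : W) : W) : ℝ) ≤ ‖T (x : W)‖ * ‖(x : W)‖ := h1
        _ ≤ (‖Tc‖ * ‖(x : W)‖) * ‖(x : W)‖ := by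
            apply mul_le_mul_of_nonneg_right h2 (norm_nonneg _)
        _ = ‖Tc‖ * ‖(x : W)‖ ^ 2 := by ring
    simp only [RCLike.re_to_real]
    rw [div_le_iff₀ (pow_pos hx 2)]
    linarith
  have hwv : T w = lam • w := by
    have := hw.apply_eq_smul
    simpa [hlam] using this
  refine ⟨lam, (w : EuclideanSpace ℝ (Fin n)).ofLp, ?_, ?_, ?_, ?_⟩
  · intro h
    exact hw.right (Subtype.ext (by simpa using congrArg (WithLp.toLp 2) h))
  · have := congrArg (Subtype.val) hwv
    exact congrArg WithLp.ofLp this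
  · exact (hmemW _).1 w.2
  · intro u hu hsum
    have humem : WithLp.toLp 2 u ∈ W := (hmemW _).2 hsum
    let xu : W := ⟨WithLp.toLp 2 u, humem⟩
    have hxu : xu ≠ 0 := fun h => hu (by have := congrArg (fun x : W => (x : EuclideanSpace ℝ (Fin n)).ofLp) h; exact this)
    have hle := le_ciSup hbdd (⟨xu, hxu⟩ : { x : W // x ≠ 0 })
    rw [← hlam] at hle
    have hle' : RCLike.re (inner ℝ (T xu) (xu : W) : ℝ) / ‖xu‖ ^ 2 ≤ lam := hle
    have he1 : (inner ℝ (T xu) (xu : W) : ℝ) = ∑ i, A.mulVec u i * u i := by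
      rw [Submodule.coe_inner, hinner]
      exact Finset.sum_congr rfl fun i _ => rfl
    have he2 : ‖xu‖ ^ 2 = ∑ i, (u i)^2 := by
      rw [← real_inner_self_eq_norm_sq xu, Submodule.coe_inner, hinner]
      exact Finset.sum_congr rfl fun i _ => (pow_two (u i)).symm
    simp only [RCLike.re_to_real] at hle'
    rw [he1, he2] at hle'
    have hN : (0:ℝ) < ∑ i, (u i)^2 := by
      obtain ⟨i, hi⟩ := Function.ne_iff.1 hu
      exact Finset.sum_pos' (fun i _ => sq_nonneg _)
        ⟨i, Finset.mem_univ i, pow_two_pos_of_ne_zero hi⟩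
    exact (div_le_iff₀ hN).1 hle'

theorem stmt6 (n : ℕ) (hn : 3 ≤ n) (A : Matrix (Fin n) (Fin n) ℝ)
    (hsymm : A.IsSymm)
    (hnonneg : ∀ i j, 0 ≤ A i j)
    (hrow : ∀ i, ∑ j, A i j = 1)
    (htridiag : ∀ i j : Fin n, 1 < |(i : ℤ) - (j : ℤ)| → A i j = 0)
    (hA1 : A.mulVec (fun _ => 1) = fun _ => 1)
    (h1A : ∀ j, ∑ i, A i j = 1)
    (hconn : ∀ i j : Fin n, Relation.ReflTransGen (fun a b => A a b ≠ 0) i j)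
    (hmax : ∀ μ : ℂ, μ ∈ spectrum ℂ (A.map (algebraMap ℝ ℂ)) → ‖μ‖ ≤ 1) :
    ∃ (lam : ℝ) (v : Fin n → ℝ), v ≠ 0 ∧ A.mulVec v = lam • v ∧
      1 - 6 / (n : ℝ) ^ 2 < lam ∧ lam < 1 ∧ (∑ i, v i) = 0 := by
  classical
  have hsymm' : ∀ i j, A j i = A i j := fun i j => by
    conv_lhs => rw [← hsymm]
    rfl
  obtain ⟨lam, v, hv0, hAv, hsum0, hQle⟩ := spectral_aux n hn A hsymm h1A
  have hx3 : (3:ℝ) ≤ (n:ℝ) := by exact_mod_cast hn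
  have hxpos : (0:ℝ) < n := by linarith
  have hQ : ∀ u : Fin n → ℝ, (∑ i, A.mulVec u i * u i) = ∑ i, ∑ j, A i j * u i * u j := by
    intro u
    simp only [Matrix.mulVec, dotProduct, Finset.sum_mul]
    exact Finset.sum_congr rfl fun i _ => Finset.sum_congr rfl fun j _ => by ring
  have hrow2 : ∀ u : Fin n → ℝ, ∑ i, ∑ j, A i j * (u i)^2 = ∑ i, (u i)^2 := by
    intro u
    refine Finset.sum_congr rfl fun i _ => ?_
    rw [← Finset.sum_mul, hrow i, one_mul]
  have hcol2 : ∀ u : Fin n → ℝ, ∑ i : Fin n, ∑ j : Fin n, A i j * (u j)^2 = ∑ i, (u i)^2 := by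
    intro u
    rw [Finset.sum_comm]
    refine Finset.sum_congr rfl fun j _ => ?_
    rw [← Finset.sum_mul, h1A j, one_mul]
  have hE : ∀ u : Fin n → ℝ, ∑ i, ∑ j, A i j * (u i - u j)^2
      = 2*(∑ i, (u i)^2) - 2*(∑ i, A.mulVec u i * u i) := by
    intro u
    rw [hQ u]
    calc ∑ i, ∑ j, A i j * (u i - u j)^2
        = ∑ i, ∑ j, (A i j * (u i)^2 + A i j * (u j)^2 - 2*(A i j * u i * u j)) :=
          Finset.sum_congr rfl fun i _ => Finset.sum_congr rfl fun j _ => by ring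
      _ = (∑ i, ∑ j, A i j * (u i)^2) + (∑ i, ∑ j, A i j * (u j)^2)
            - 2*(∑ i, ∑ j, A i j * u i * u j) := by
          rw [Finset.mul_sum, ← Finset.sum_add_distrib, ← Finset.sum_sub_distrib]
          refine Finset.sum_congr rfl fun i _ => ?_
          rw [Finset.mul_sum, ← Finset.sum_add_distrib, ← Finset.sum_sub_distrib]
      _ = 2*(∑ i, (u i)^2) - 2*(∑ i, ∑ j, A i j * u i * u j) := by
          rw [hrow2 u, hcol2 u]; ring
  have hEnonneg : ∀ u : Fin n → ℝ, 0 ≤ ∑ i, ∑ j, A i j * (u i - u j)^2 := by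
    intro u
    apply Finset.sum_nonneg; intro i _
    apply Finset.sum_nonneg; intro j _
    exact mul_nonneg (hnonneg i j) (sq_nonneg _)
  have hNpos : ∀ u : Fin n → ℝ, u ≠ 0 → 0 < ∑ i, (u i)^2 := by
    intro u hu
    obtain ⟨i, hi⟩ := Function.ne_iff.1 hu
    exact Finset.sum_pos' (fun i _ => sq_nonneg _)
      ⟨i, Finset.mem_univ i, pow_two_pos_of_ne_zero hi⟩
  refine ⟨lam, v, hv0, hAv, ?_, ?_, hsum0⟩
  · -- lower bound
    set D := ∑ i, A i i with hDdef
    rcases lt_or_ge (1/(n:ℝ)) D with hD1 | hD2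
    · -- Case 1 : linear test vector
      let u : Fin n → ℝ := fun i => 2*((i:ℕ):ℝ) - ((n:ℝ)-1)
      have husum : ∑ i, u i = 0 := by
        have h0 : ∑ i, u i = ∑ m ∈ Finset.range n, (2*(m:ℝ) - ((n:ℝ)-1)) :=
          Fin.sum_univ_eq_sum_range (fun m => 2*(m:ℝ) - ((n:ℝ)-1)) n
        rw [h0, Finset.sum_sub_distrib, ← Finset.mul_sum, sum_range_cast,
            Finset.sum_const, Finset.card_range, nsmul_eq_mul]
        ring
      have hNu : ∑ i, (u i)^2 = (n:ℝ)*((n:ℝ)-1)*((n:ℝ)+1)/3 := by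
        have h0 : ∑ i, (u i)^2 = ∑ m ∈ Finset.range n, (2*(m:ℝ) - ((n:ℝ)-1))^2 :=
          Fin.sum_univ_eq_sum_range (fun m => (2*(m:ℝ) - ((n:ℝ)-1))^2) n
        rw [h0]
        have h1 : ∀ m : ℕ, (2*(m:ℝ) - ((n:ℝ)-1))^2
            = 4*(m:ℝ)^2 - (4*((n:ℝ)-1))*(m:ℝ) + ((n:ℝ)-1)^2 := fun m => by ring
        simp only [h1]
        rw [Finset.sum_add_distrib, Finset.sum_sub_distrib, ← Finset.mul_sum, ← Finset.mul_sum,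
            sum_range_sq_cast, sum_range_cast, Finset.sum_const, Finset.card_range, nsmul_eq_mul]
        ring
      have hterm : ∀ i j : Fin n, A i j * (u i - u j)^2
          = 4*A i j - 4*(if i = j then A i j else 0) := by
        intro i j
        by_cases hij : i = j
        · subst hij; simp
        · rw [if_neg hij]
          by_cases habs : 1 < |(i:ℤ) - (j:ℤ)|
          · rw [htridiag i j habs]; ring
          · have h1 : ((i:ℤ) - (j:ℤ)) = 1 ∨ ((i:ℤ) - (j:ℤ)) = -1 := by
              have h2 := abs_le.1 (not_lt.1 habs)
              have h3 : (i:ℤ) ≠ (j:ℤ) := by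
                intro h
                exact hij (Fin.ext (by exact_mod_cast h))
              omega
            have h4 : u i - u j = 2*(((i:ℕ):ℝ) - ((j:ℕ):ℝ)) := by
              show 2*((i:ℕ):ℝ) - ((n:ℝ)-1) - (2*((j:ℕ):ℝ) - ((n:ℝ)-1)) = _
              ring
            have h5 : (((i:ℕ):ℝ) - ((j:ℕ):ℝ))^2 = 1 := by
              rcases h1 with h | h
              · have h6 : ((i:ℕ):ℝ) - ((j:ℕ):ℝ) = 1 := by exact_mod_cast h
                rw [h6]; norm_num
              · have h6 : ((i:ℕ):ℝ) - ((j:ℕ):ℝ) = -1 := by exact_mod_cast h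
                rw [h6]; norm_num
            have h7 : (u i - u j)^2 = 4 := by
              rw [h4, mul_pow, h5]; norm_num
            rw [h7]; ring
      have hEu : ∑ i, ∑ j, A i j * (u i - u j)^2 = 4*(n:ℝ) - 4*D := by
        calc ∑ i, ∑ j, A i j * (u i - u j)^2
            = ∑ i : Fin n, ∑ j : Fin n, (4*A i j - 4*(if i = j then A i j else 0)) :=
              Finset.sum_congr rfl fun i _ => Finset.sum_congr rfl fun j _ => hterm i j
          _ = (∑ i : Fin n, ∑ j : Fin n, 4*A i j)
              - ∑ i : Fin n, ∑ j : Fin n, 4*(if i = j then A i j else 0) := by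
              rw [← Finset.sum_sub_distrib]
              exact Finset.sum_congr rfl fun i _ => by rw [← Finset.sum_sub_distrib]
          _ = 4*(n:ℝ) - 4*D := by
              have hA2 : ∑ i : Fin n, ∑ j : Fin n, 4*A i j = 4*(n:ℝ) := by
                have h1 : ∀ i : Fin n, ∑ j, 4*A i j = 4 := by
                  intro i; rw [← Finset.mul_sum, hrow i, mul_one]
                simp only [h1]
                rw [Finset.sum_const, Finset.card_univ, Fintype.card_fin, nsmul_eq_mul]
                ring
              have hB2 : ∑ i : Fin n, ∑ j : Fin n, 4*(if i = j then A i j else 0) = 4*D := by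
                have h1 : ∀ i : Fin n, ∑ j : Fin n, 4*(if i = j then A i j else 0) = 4*A i i := by
                  intro i
                  rw [← Finset.mul_sum, Finset.sum_ite_eq]
                  simp
                simp only [h1]
                rw [← Finset.mul_sum, hDdef]
              rw [hA2, hB2]
      have hune : u ≠ 0 := by
        intro h
        have h0 : u ⟨0, by omega⟩ = 0 := by rw [h]; rfl
        have h1 : (2:ℝ)*(((0:ℕ)):ℝ) - ((n:ℝ)-1) = 0 := h0
        norm_num at h1
        linarith
      have hQu := hQle u hune husum
      have hEu2 := hE u
      have hNpos' : 0 < (n:ℝ)*((n:ℝ)-1)*((n:ℝ)+1)/3 := by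
        have h1 : (0:ℝ) < (n:ℝ)-1 := by linarith
        have h2 : (0:ℝ) < (n:ℝ)+1 := by linarith
        exact div_pos (mul_pos (mul_pos hxpos h1) h2) (by norm_num)
      have hkey : (1 - 6/(n:ℝ)^2) * ((n:ℝ)*((n:ℝ)-1)*((n:ℝ)+1)/3) < ∑ i, A.mulVec u i * u i := by
        have hQval : ∑ i, A.mulVec u i * u i
            = (n:ℝ)*((n:ℝ)-1)*((n:ℝ)+1)/3 - (2*(n:ℝ) - 2*D) := by
          rw [hEu, hNu] at hEu2; linarith
        rw [hQval]
        have hne : (n:ℝ) ≠ 0 := by linarith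
        have e1 : (1 - 6/(n:ℝ)^2) * ((n:ℝ)*((n:ℝ)-1)*((n:ℝ)+1)/3)
            = (n:ℝ)*((n:ℝ)-1)*((n:ℝ)+1)/3 - 2*((n:ℝ) - 1/(n:ℝ)) := by
          field_simp
          ring
        rw [e1]
        linarith
      rw [hNu] at hQu
      exact (mul_lt_mul_iff_of_pos_right hNpos').1 (hkey.trans_le hQu)
    · -- Case 2 : step test vector
      obtain ⟨q, j, hjq, hj1, hPR⟩ :
          ∃ q j : ℕ, j = 2*q+1 ∧ j + 1 < n ∧
            ((n:ℝ))^2 < 6*(((j:ℝ)+1)*((n:ℝ)-1-(j:ℝ))) := by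
        refine ⟨(n-2)/4, 2*((n-2)/4)+1, rfl, ?_, ?_⟩
        · have := Nat.div_add_mod (n-2) 4
          have := Nat.mod_lt (n-2) (show 0 < 4 by norm_num)
          omega
        · obtain ⟨r, hr4, hn2⟩ : ∃ r, r < 4 ∧ n = 4*((n-2)/4) + r + 2 :=
            ⟨(n-2)%4, Nat.mod_lt _ (by norm_num), by
              have := Nat.div_add_mod (n-2) 4; omega⟩
          set qq := (n-2)/4 with hqq
          have hjR : ((2*qq+1 : ℕ):ℝ) = 2*(qq:ℝ)+1 := by push_cast; ring
          have hnR : (n:ℝ) = 4*(qq:ℝ)+(r:ℝ)+2 := by exact_mod_cast congrArg (Nat.cast (R := ℝ)) hn2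
          rw [hjR, hnR]
          interval_cases r
          · have hq1 : 1 ≤ qq := by omega
            have hq1R : (1:ℝ) ≤ (qq:ℝ) := by exact_mod_cast hq1
            push_cast
            nlinarith
          · push_cast; nlinarith [Nat.cast_nonneg (α := ℝ) qq]
          · push_cast; nlinarith [Nat.cast_nonneg (α := ℝ) qq]
          · push_cast; nlinarith [Nat.cast_nonneg (α := ℝ) qq]
      have hs : A ⟨j, by omega⟩ ⟨j+1, hj1⟩ ≤ D := by
        subst hjq
        exact edge_odd_le n A hsymm' hnonneg hrow htridiag q hj1
      set s : ℝ := A ⟨j, by omega⟩ ⟨j+1, hj1⟩ with hsdef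
      have hs0 : 0 ≤ s := hnonneg _ _
      set a : ℝ := (n:ℝ) - 1 - (j:ℝ) with ha
      set b : ℝ := (j:ℝ) + 1 with hb
      have hj0R : (0:ℝ) ≤ (j:ℝ) := Nat.cast_nonneg j
      have hjnR : ((j:ℝ)) + 2 ≤ (n:ℝ) := by exact_mod_cast (show j + 2 ≤ n by omega)
      have ha1 : 1 ≤ a := by rw [ha]; linarith
      have hb1 : 1 ≤ b := by rw [hb]; linarith
      have hab : a + b = (n:ℝ) := by rw [ha, hb]; ring
      let u : Fin n → ℝ := fun i => if (i:ℕ) ≤ j then -a else b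
      have hfilter1 : (Finset.range n).filter (fun m => m ≤ j) = Finset.range (j+1) := by
        ext m
        simp only [Finset.mem_filter, Finset.mem_range, Nat.lt_succ_iff]
        omega
      have hfilter2 : (Finset.range n).filter (fun m => ¬ m ≤ j) = Finset.Ico (j+1) n := by
        ext m
        simp only [Finset.mem_filter, Finset.mem_range, Finset.mem_Ico]
        omega
      have hcast : ((n - (j+1) : ℕ) : ℝ) = a := by
        rw [Nat.cast_sub (by omega), ha]; push_cast; ring
      have hcastb : ((j+1 : ℕ) : ℝ) = b := by rw [hb]; push_cast; ring
      have husum : ∑ i, u i = 0 := by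
        have h0 : ∑ i, u i = ∑ m ∈ Finset.range n, (if m ≤ j then -a else b) :=
          Fin.sum_univ_eq_sum_range (fun m => if m ≤ j then -a else b) n
        rw [h0, Finset.sum_ite, hfilter1, hfilter2, Finset.sum_const, Finset.sum_const,
            Finset.card_range, Nat.card_Ico, nsmul_eq_mul, nsmul_eq_mul, hcast, hcastb]
        ring
      have hNu : ∑ i, (u i)^2 = a*b*(n:ℝ) := by
        have h0 : ∑ i, (u i)^2 = ∑ m ∈ Finset.range n, (if m ≤ j then (-a)^2 else b^2) := by
          rw [Fin.sum_univ_eq_sum_range (fun m => (if m ≤ j then -a else b)^2) n]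
          exact Finset.sum_congr rfl fun m _ => by split_ifs <;> rfl
        rw [h0, Finset.sum_ite, hfilter1, hfilter2, Finset.sum_const, Finset.sum_const,
            Finset.card_range, Nat.card_Ico, nsmul_eq_mul, nsmul_eq_mul, hcast, hcastb]
        rw [← hab]
        ring
      have hune : u ≠ 0 := by
        intro h
        have h0 : u ⟨0, by omega⟩ = 0 := by rw [h]; rfl
        have h1 : (if (0:ℕ) ≤ j then -a else b) = 0 := h0
        rw [if_pos (Nat.zero_le j)] at h1
        linarith
      have hrhs0 : ∀ p k : Fin n, (0:ℝ) ≤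
          (if p = (⟨j, by omega⟩ : Fin n) ∧ k = (⟨j+1, hj1⟩ : Fin n) then (n:ℝ)^2*s else 0)
          + (if p = (⟨j+1, hj1⟩ : Fin n) ∧ k = (⟨j, by omega⟩ : Fin n) then (n:ℝ)^2*s else 0) := by
        intro p k
        apply add_nonneg <;> (split_ifs <;> positivity)
      have htermb : ∀ p k : Fin n, A p k * (u p - u k)^2
          ≤ (if p = (⟨j, by omega⟩ : Fin n) ∧ k = (⟨j+1, hj1⟩ : Fin n) then (n:ℝ)^2*s else 0)
            + (if p = (⟨j+1, hj1⟩ : Fin n) ∧ k = (⟨j, by omega⟩ : Fin n) then (n:ℝ)^2*s else 0) := by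
        intro p k
        by_cases hp : (p:ℕ) ≤ j <;> by_cases hk : (k:ℕ) ≤ j
        · have h1 : u p - u k = 0 := by simp [u, hp, hk]
          have h2 : A p k * (u p - u k)^2 = 0 := by rw [h1]; ring
          rw [h2]; exact hrhs0 p k
        · by_cases hpk : (p:ℕ) = j ∧ (k:ℕ) = j + 1
          · have hpe : p = (⟨j, by omega⟩ : Fin n) := Fin.ext hpk.1
            have hke : k = (⟨j+1, hj1⟩ : Fin n) := Fin.ext hpk.2
            rw [if_pos ⟨hpe, hke⟩, if_neg (by
              rintro ⟨h1, -⟩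
              have := congrArg Fin.val h1
              simp only [hpk.1] at this
              omega)]
            have hup : u p = -a := by simp [u, hp]
            have huk : u k = b := by simp [u, hk]
            have h1 : A p k * (u p - u k)^2 = s * (n:ℝ)^2 := by
              rw [hup, huk, hpe, hke, ← hsdef]
              rw [show -a - b = -((n:ℝ)) by rw [← hab]; ring]
              ring
            rw [h1, add_zero]
            exact le_of_eq (mul_comm _ _)
          · have hA0 : A p k = 0 := by
              apply htridiag p k
              rw [abs_of_nonpos (by push_cast; omega)]
              push_cast
              omega
            have h2 : A p k * (u p - u k)^2 = 0 := by rw [hA0]; ring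
            rw [h2]; exact hrhs0 p k
        · by_cases hpk : (p:ℕ) = j+1 ∧ (k:ℕ) = j
          · have hpe : p = (⟨j+1, hj1⟩ : Fin n) := Fin.ext hpk.1
            have hke : k = (⟨j, by omega⟩ : Fin n) := Fin.ext hpk.2
            rw [if_neg (by
              rintro ⟨h1, -⟩
              have h2 := congrArg Fin.val h1
              simp only [hpk.1] at h2
              omega), if_pos ⟨hpe, hke⟩]
            have hup : u p = b := by simp [u, hp]
            have huk : u k = -a := by simp [u, hk]
            have e : A (⟨j+1, hj1⟩ : Fin n) (⟨j, by omega⟩ : Fin n) = s := by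
              rw [hsdef]; exact hsymm' _ _
            have h1 : A p k * (u p - u k)^2 = s * (n:ℝ)^2 := by
              rw [hup, huk, hpe, hke, e, show b - -a = (n:ℝ) by rw [← hab]; ring]
            rw [h1, zero_add]
            exact le_of_eq (mul_comm _ _)
          · have hA0 : A p k = 0 := by
              apply htridiag p k
              rw [abs_of_nonneg (by push_cast; omega)]
              push_cast
              omega
            have h2 : A p k * (u p - u k)^2 = 0 := by rw [hA0]; ring
            rw [h2]; exact hrhs0 p k
        · have h1 : u p - u k = 0 := by simp [u, hp, hk]
          have h2 : A p k * (u p - u k)^2 = 0 := by rw [h1]; ring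
          rw [h2]; exact hrhs0 p k
      have hEu : ∑ p, ∑ k, A p k * (u p - u k)^2 ≤ 2*(n:ℝ)^2*s := by
        calc ∑ p, ∑ k, A p k * (u p - u k)^2
            ≤ ∑ p : Fin n, ∑ k : Fin n,
              ((if p = (⟨j, by omega⟩ : Fin n) ∧ k = (⟨j+1, hj1⟩ : Fin n) then (n:ℝ)^2*s else 0)
              + (if p = (⟨j+1, hj1⟩ : Fin n) ∧ k = (⟨j, by omega⟩ : Fin n) then (n:ℝ)^2*s else 0)) :=
              Finset.sum_le_sum fun p _ => Finset.sum_le_sum fun k _ => htermb p k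
          _ = 2*(n:ℝ)^2*s := by
              have hdouble : ∀ (p0 k0 : Fin n) (c : ℝ),
                  (∑ x : Fin n, ∑ y : Fin n, if x = p0 ∧ y = k0 then c else 0) = c := by
                intro p0 k0 c
                have h1 : ∀ x : Fin n,
                    (∑ y : Fin n, if x = p0 ∧ y = k0 then c else 0)
                      = if x = p0 then c else 0 := by
                  intro x
                  by_cases hx : x = p0
                  · simp [hx]
                  · simp [hx]
                simp only [h1]
                simp
              simp only [Finset.sum_add_distrib]
              rw [hdouble, hdouble]
              ring
      have hQu := hQle u hune husum
      have hEu2 := hE u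
      have hNpos2 : 0 < a*b*(n:ℝ) := by nlinarith
      have hslow : (n:ℝ)^3 * s ≤ (n:ℝ)^2 := by
        have h1 : s ≤ 1/(n:ℝ) := le_trans hs hD2
        have h2 : (n:ℝ)^3 * s ≤ (n:ℝ)^3 * (1/(n:ℝ)) :=
          mul_le_mul_of_nonneg_left h1 (by positivity)
        have h3 : (n:ℝ)^3 * (1/(n:ℝ)) = (n:ℝ)^2 := by
          field_simp
        linarith
      have hkey : (1 - 6/(n:ℝ)^2) * (a*b*(n:ℝ)) < ∑ i, A.mulVec u i * u i := by
        have hQlow : (∑ i, (u i)^2) - (n:ℝ)^2*s ≤ ∑ i, A.mulVec u i * u i := by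
          linarith
        rw [hNu] at hQlow
        have hne : (n:ℝ) ≠ 0 := by linarith
        have e1 : (1 - 6/(n:ℝ)^2) * (a*b*(n:ℝ)) = a*b*(n:ℝ) - 6*(a*b)/(n:ℝ) := by
          field_simp
        have e2 : (n:ℝ)^2*s < 6*(a*b)/(n:ℝ) := by
          rw [lt_div_iff₀ hxpos]
          have hPR' : ((n:ℝ))^2 < 6*(a*b) := by
            rw [mul_comm a b]; exact hPR
          nlinarith [hslow, hPR', hs0, hxpos]
        rw [e1]
        calc a*b*(n:ℝ) - 6*(a*b)/(n:ℝ) < a*b*(n:ℝ) - (n:ℝ)^2*s := sub_lt_sub_left e2 _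
        _ ≤ ∑ i, A.mulVec u i * u i := hQlow
      rw [hNu] at hQu
      exact (mul_lt_mul_iff_of_pos_right hNpos2).1 (hkey.trans_le hQu)
  · -- lam < 1
    have hQv : ∑ i, A.mulVec v i * v i = lam * ∑ i, (v i)^2 := by
      rw [hAv, Finset.mul_sum]
      refine Finset.sum_congr rfl fun i _ => ?_
      simp only [Pi.smul_apply, smul_eq_mul]
      ring
    by_contra hcon
    push_neg at hcon
    have hEv := hE v
    have hNv := hNpos v hv0
    have hEzero : ∑ i, ∑ j, A i j * (v i - v j)^2 = 0 := by
      have hle : ∑ i, ∑ j, A i j * (v i - v j)^2 ≤ 0 := by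
        rw [hEv, hQv]; nlinarith
      linarith [hEnonneg v]
    have hterm : ∀ i j : Fin n, A i j ≠ 0 → v i = v j := by
      intro i j hij
      have h1 := (Finset.sum_eq_zero_iff_of_nonneg
        (fun i _ => Finset.sum_nonneg fun j _ => mul_nonneg (hnonneg i j) (sq_nonneg _))).1
        hEzero i (Finset.mem_univ i)
      have h2 := (Finset.sum_eq_zero_iff_of_nonneg
        (fun j _ => mul_nonneg (hnonneg i j) (sq_nonneg _))).1 h1 j (Finset.mem_univ j)
      rcases mul_eq_zero.1 h2 with h | h
      · exact absurd h hij
      · have h3 : v i - v j = 0 := by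
          have := pow_eq_zero_iff (n := 2) (by norm_num) |>.1 h
          exact this
        linarith
    have hconst : ∀ i j : Fin n, v i = v j := by
      intro i j
      have h := hconn i j
      induction h with
      | refl => rfl
      | tail _ hbc ih => exact ih.trans (hterm _ _ hbc)
    have hveq : v = 0 := by
      funext i
      have h1 : ∑ k, v k = ∑ _k : Fin n, v i := Finset.sum_congr rfl fun k _ => hconst k i
      rw [Finset.sum_const, Finset.card_univ, Fintype.card_fin, hsum0, nsmul_eq_mul] at h1
      have h2 : (n:ℝ) * v i = 0 := h1.symm
      rcases mul_eq_zero.1 h2 with h | h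
      · exact absurd h (by positivity)
      · exact h
    exact hv0 hveq
end

section
/- Let A be an n×n real matrix such that A𝟙 = 𝟙 and for every x with 𝟙ᵀx = 0, lim_{m→∞} Aᵐx = 0. Suppose also that for some nonempty proper subset S of {1,...,n}, a_{ij} = 0 for all i ∈ S and j ∉ S. Then a contradiction arises; i.e., if Aᵏx → x̄𝟙 for all x, the directed graph on {1,...,n} with edges {(i,j): a_{ij} ≠ 0} must be strongly connected. -/
theorem stmt13 (n : ℕ) (hn : 0 < n) (A : Matrix (Fin n) (Fin n) ℝ)
    (hA1 : A.mulVec (fun _ => 1) = fun _ => 1)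
    (hconv : ∀ x : Fin n → ℝ, (∑ i, x i) = 0 →
      Filter.Tendsto (fun m => (A ^ m).mulVec x) Filter.atTop (nhds 0)) :
    ∀ S : Finset (Fin n), S.Nonempty → S ≠ Finset.univ →
      ∃ i ∈ S, ∃ j ∉ S, A i j ≠ 0 := by
  intro S hS hSU
  by_contra h
  push_neg at h
  -- h : ∀ i ∈ S, ∀ j ∉ S, A i j = 0
  obtain ⟨i0, hi0⟩ := hS
  set c : ℝ := (Finset.univ \ S).card / n with hc
  have hcompl : (Finset.univ \ S).Nonempty := by
    rw [Finset.sdiff_nonempty]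
    intro hsub
    exact hSU (Finset.univ_subset_iff.mp hsub)
  have hcpos : 0 < c := by
    apply div_pos
    · exact_mod_cast Finset.card_pos.mpr hcompl
    · exact_mod_cast hn
  set v : Fin n → ℝ := fun j => if j ∈ S then 0 else 1 with hv
  set x : Fin n → ℝ := fun j => v j - c with hx
  have hsum : (∑ i, x i) = 0 := by
    simp only [hx, Finset.sum_sub_distrib, Finset.sum_const, Finset.card_univ,
      Fintype.card_fin, nsmul_eq_mul]
    have hvsum : (∑ i, v i) = (Finset.univ \ S).card := by
      simp only [hv]
      rw [Finset.sum_ite, Finset.sum_const, Finset.sum_const, Finset.sdiff_eq_filter]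
      simp
    rw [hvsum, hc]
    field_simp
    ring
  -- v stays zero on S under powers of A
  have key : ∀ m : ℕ, ∀ i ∈ S, ((A ^ m).mulVec v) i = 0 := by
    intro m
    induction m with
    | zero => intro i hi; rw [pow_zero, Matrix.one_mulVec]; simp [hv, hi]
    | succ m ih =>
      intro i hi
      rw [pow_succ', ← Matrix.mulVec_mulVec]
      simp only [Matrix.mulVec, dotProduct]
      apply Finset.sum_eq_zero
      intro j _
      by_cases hj : j ∈ S
      · have := ih j hj
        simp only [Matrix.mulVec, dotProduct] at this
        rw [this, mul_zero]
      · rw [h i hi j hj, zero_mul]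
  -- A^m preserves constant ones
  have hones : ∀ m : ℕ, (A ^ m).mulVec (fun _ => 1) = fun _ => 1 := by
    intro m
    induction m with
    | zero => simp [Matrix.mulVec_one]
    | succ m ih =>
      rw [pow_succ', ← Matrix.mulVec_mulVec, ih, hA1]
  have hxval : ∀ m : ℕ, ((A ^ m).mulVec x) i0 = -c := by
    intro m
    have : x = v - c • (fun _ => (1:ℝ)) := by
      ext j; simp [hx]
    rw [this, Matrix.mulVec_sub, Matrix.mulVec_smul]
    simp [key m i0 hi0, hones m]
  have htend := hconv x hsum
  have htend0 : Filter.Tendsto (fun m => ((A ^ m).mulVec x) i0) Filter.atTop (nhds 0) := by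
    have := htend.comp (Filter.tendsto_id)
    exact (continuous_apply i0).continuousAt.tendsto.comp htend
  simp only [hxval] at htend0
  have := tendsto_nhds_unique htend0 tendsto_const_nhds
  linarith
end

section
/- Let f: ℝⁿ → ℝⁿ be differentiable with f(0) = 0, and let A = f'(0) be its Jacobian at 0. Suppose there exists τ such that for all nonzero x, ‖f^τ(x)‖₂ ≤ (1/2)‖x‖₂ eventually near 0 (i.e., for x in some ball around the origin). Then for all x with 𝟙ᵀx = 0 lying in a sufficiently small ball, lim_{m→∞} (A^τ)ᵐ x = 0; in particular ‖A^τ x‖₂ ≤ (3/4)‖x‖₂ for all such x, hence lim_{m→∞} Aᵐx = 0 for all x with 𝟙ᵀx = 0. -/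
open Filter

lemma stmt14_iter_deriv {n : ℕ} (f : EuclideanSpace ℝ (Fin n) → EuclideanSpace ℝ (Fin n))
    (hdiff : Differentiable ℝ f) (hf0 : f 0 = 0) :
    ∀ k, HasFDerivAt (f^[k]) ((fderiv ℝ f 0) ^ k) 0 := by
  intro k
  induction k with
  | zero => simpa [ContinuousLinearMap.one_def] using hasFDerivAt_id (0 : EuclideanSpace ℝ (Fin n))
  | succ k ih =>
    rw [Function.iterate_succ']
    have hfix : f^[k] 0 = 0 := Function.iterate_fixed hf0 k
    have h1 : HasFDerivAt f (fderiv ℝ f 0) (f^[k] 0) := by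
      rw [hfix]; exact (hdiff 0).hasFDerivAt
    have := h1.comp 0 ih
    rw [pow_succ']
    exact this

theorem stmt14 (n : ℕ) (f : EuclideanSpace ℝ (Fin n) → EuclideanSpace ℝ (Fin n))
    (hdiff : Differentiable ℝ f) (hf0 : f 0 = 0)
    (τ : ℕ)
    (hcontraction : ∃ ε > 0, ∀ x : EuclideanSpace ℝ (Fin n),
      ‖x‖ < ε → x ≠ 0 → ‖f^[τ] x‖ ≤ (1 / 2) * ‖x‖) :
    ∀ x : EuclideanSpace ℝ (Fin n), (∑ i, x i) = 0 →
      Filter.Tendsto (fun m => (((fderiv ℝ f 0) ^ τ) ^ m) x) Filter.atTop (nhds 0) ∧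
      ‖((fderiv ℝ f 0) ^ τ) x‖ ≤ (3 / 4) * ‖x‖ ∧
      Filter.Tendsto (fun m => ((fderiv ℝ f 0) ^ m) x) Filter.atTop (nhds 0) := by
  set A := fderiv ℝ f 0 with hA
  -- Step 1: universal bound ‖A^τ y‖ ≤ (3/4)‖y‖
  have key : ∀ y : EuclideanSpace ℝ (Fin n), ‖(A ^ τ) y‖ ≤ (3/4) * ‖y‖ := by
    have hder := stmt14_iter_deriv f hdiff hf0 τ
    have hfix : f^[τ] 0 = 0 := Function.iterate_fixed hf0 τ
    have hlo := hder.isLittleO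
    have hlo2 := hlo.def (by norm_num : (0:ℝ) < 1/4)
    simp only [hfix, sub_zero] at hlo2
    obtain ⟨ε, hε, hc⟩ := hcontraction
    have hev : ∀ᶠ y in nhds (0 : EuclideanSpace ℝ (Fin n)), ‖(A ^ τ) y‖ ≤ (3/4) * ‖y‖ := by
      filter_upwards [hlo2, Metric.ball_mem_nhds (0 : EuclideanSpace ℝ (Fin n)) hε] with y h1 h2
      rcases eq_or_ne y 0 with rfl | hy0
      · simp
      · have hball : ‖y‖ < ε := by simpa [dist_eq_norm] using h2
        have := hc y hball hy0
        have h3 : ‖(A ^ τ) y‖ ≤ ‖f^[τ] y‖ + ‖f^[τ] y - (A ^ τ) y‖ := by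
          have := norm_sub_norm_le ((A ^ τ) y) (f^[τ] y)
          calc ‖(A ^ τ) y‖ ≤ ‖f^[τ] y‖ + ‖(A ^ τ) y - f^[τ] y‖ := by
                have := norm_add_le (f^[τ] y) ((A ^ τ) y - f^[τ] y)
                simpa using this
            _ = ‖f^[τ] y‖ + ‖f^[τ] y - (A ^ τ) y‖ := by rw [norm_sub_rev]
        calc ‖(A ^ τ) y‖ ≤ ‖f^[τ] y‖ + ‖f^[τ] y - (A ^ τ) y‖ := h3
          _ ≤ (1/2) * ‖y‖ + (1/4) * ‖y‖ := add_le_add this h1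
          _ = (3/4) * ‖y‖ := by ring
    rw [Metric.eventually_nhds_iff] at hev
    obtain ⟨δ, hδ, hδb⟩ := hev
    intro y
    rcases eq_or_ne y 0 with rfl | hy0
    · simp
    · have hny : (0:ℝ) < ‖y‖ := norm_pos_iff.mpr hy0
      set c : ℝ := δ / (2 * ‖y‖) with hc'
      have hcpos : 0 < c := by positivity
      have hnorm : ‖c • y‖ = c * ‖y‖ := by
        rw [norm_smul, Real.norm_eq_abs, abs_of_pos hcpos]
      have hsmall : dist (c • y) 0 < δ := by
        rw [dist_zero_right, hnorm]
        have : c * ‖y‖ = δ / 2 := by rw [hc']; field_simp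
        rw [this]; linarith
      have := hδb hsmall
      rw [map_smul, norm_smul, Real.norm_eq_abs, abs_of_pos hcpos, hnorm] at this
      have : ‖(A ^ τ) y‖ ≤ (3/4) * ‖y‖ := by
        have h := (mul_le_mul_iff_right₀ hcpos).mp (by linarith [this] : c * ‖(A ^ τ) y‖ ≤ c * ((3/4) * ‖y‖))
        exact h
      exact this
  intro x hx
  -- Step 2: iterate bound
  have iterbd : ∀ m (y : EuclideanSpace ℝ (Fin n)), ‖((A ^ τ) ^ m) y‖ ≤ (3/4)^m * ‖y‖ := by
    intro m
    induction m with
    | zero => intro y; simp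
    | succ m ih =>
      intro y
      rw [pow_succ']
      calc ‖(A ^ τ) (((A ^ τ) ^ m) y)‖ ≤ (3/4) * ‖((A ^ τ) ^ m) y‖ := key _
        _ ≤ (3/4) * ((3/4)^m * ‖y‖) := by
            have := ih y; nlinarith
        _ = (3/4)^(m+1) * ‖y‖ := by ring
  have h34 : Tendsto (fun m : ℕ => ((3:ℝ)/4)^m) atTop (nhds 0) :=
    tendsto_pow_atTop_nhds_zero_of_lt_one (by norm_num) (by norm_num)
  have t1 : Tendsto (fun m => ((A ^ τ) ^ m) x) atTop (nhds 0) := by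
    apply squeeze_zero_norm (fun m => iterbd m x)
    simpa using h34.mul_const ‖x‖
  refine ⟨t1, by simpa using key x, ?_⟩
  -- Step 3: A^m tends to 0
  rcases Nat.eq_zero_or_pos τ with rfl | hτ
  · -- τ = 0 : key gives x = 0
    have := key x
    simp at this
    have hx0 : x = 0 := by
      rcases eq_or_ne x 0 with h | h
      · exact h
      · exfalso; have : (0:ℝ) < ‖x‖ := norm_pos_iff.mpr h; linarith
    subst hx0
    simpa only [map_zero] using (tendsto_const_nhds : Filter.Tendsto (fun _ : ℕ => (0 : EuclideanSpace ℝ (Fin n))) Filter.atTop (nhds 0))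
  · set C : ℝ := (max 1 ‖A‖) ^ τ with hC
    have hC1 : (1:ℝ) ≤ max 1 ‖A‖ := le_max_left _ _
    have hCpos : 0 < C := pow_pos (lt_of_lt_of_le one_pos hC1) τ
    have hAk : ∀ (k : ℕ) (z : EuclideanSpace ℝ (Fin n)),
        ‖(A ^ k) z‖ ≤ (max 1 ‖A‖) ^ k * ‖z‖ := by
      intro k
      induction k with
      | zero =>
        intro z
        rw [pow_zero, pow_zero, one_mul]
        exact le_of_eq (congrArg norm (ContinuousLinearMap.one_apply z))
      | succ k ih =>
        intro z
        rw [pow_succ']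
        calc ‖A ((A ^ k) z)‖ ≤ ‖A‖ * ‖(A ^ k) z‖ := A.le_opNorm _
          _ ≤ (max 1 ‖A‖) * ((max 1 ‖A‖) ^ k * ‖z‖) := by
              have h1 := ih z
              have h2 : ‖A‖ ≤ max 1 ‖A‖ := le_max_right _ _
              have h3 : (0:ℝ) ≤ ‖(A ^ k) z‖ := norm_nonneg _
              have h4 : (0:ℝ) ≤ ‖A‖ := norm_nonneg _
              nlinarith
          _ = (max 1 ‖A‖) ^ (k+1) * ‖z‖ := by ring
    have bd : ∀ m, ‖(A ^ m) x‖ ≤ C * ((3/4)^(m / τ) * ‖x‖) := by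
      intro m
      have hdecomp : A ^ m = (A ^ (m % τ)) * ((A ^ τ) ^ (m / τ)) := by
        rw [← pow_mul, ← pow_add, Nat.mod_add_div]
      rw [hdecomp]
      have h1 := hAk (m % τ) (((A ^ τ) ^ (m / τ)) x)
      have h2 : (max 1 ‖A‖) ^ (m % τ) ≤ C := by
        exact pow_le_pow_right₀ hC1 (le_of_lt (Nat.mod_lt m hτ))
      calc ‖((A ^ (m % τ)) * ((A ^ τ) ^ (m / τ))) x‖
          = ‖(A ^ (m % τ)) (((A ^ τ) ^ (m / τ)) x)‖ := rfl
        _ ≤ (max 1 ‖A‖) ^ (m % τ) * ‖((A ^ τ) ^ (m / τ)) x‖ := h1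
        _ ≤ C * ((3/4)^(m / τ) * ‖x‖) := by
            have h3 := iterbd (m / τ) x
            have h4 : (0:ℝ) ≤ ‖((A ^ τ) ^ (m / τ)) x‖ := norm_nonneg _
            have h5 : (0:ℝ) ≤ (max 1 ‖A‖) ^ (m % τ) := by positivity
            nlinarith
    apply squeeze_zero_norm bd
    have hdiv : Tendsto (fun m : ℕ => m / τ) atTop atTop :=
      (Filter.map_div_atTop_eq_nat τ hτ).le
    have := (h34.comp hdiv).mul_const ‖x‖
    simpa using (this.const_mul C)
end

section
/- Let A be a stochastic n×n matrix and π an entrywise positive vector with πᵀA = πᵀ and πᵀ𝟙 = 1. Let D = diag(π) and H = I − 𝟙πᵀ, and set M = HᵀDH. Then: (i) M𝟙 = 0; (ii) HA = AH; (iii) for every x ∈ ℝⁿ, xᵀAᵀMAx ≤ xᵀMx. In particular M is symmetric, nonnegative definite, of rank n−1, and x ↦ xᵀMx is a quadratic Lyapunov function for the iteration x ↦ Ax. -/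
open Matrix

theorem stmt19 (n : ℕ) (A : Matrix (Fin n) (Fin n) ℝ)
    (hnonneg : ∀ i j, 0 ≤ A i j)
    (hrow : ∀ i, ∑ j, A i j = 1)
    (π : Fin n → ℝ) (hπ : ∀ i, 0 < π i)
    (hπA : ∀ j, ∑ i, π i * A i j = π j)
    (hπ1 : ∑ i, π i = 1) :
    let D : Matrix (Fin n) (Fin n) ℝ := Matrix.diagonal π
    let H : Matrix (Fin n) (Fin n) ℝ := 1 - Matrix.of (fun _ j => π j)
    let M : Matrix (Fin n) (Fin n) ℝ := Hᵀ * D * H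
    M.mulVec (fun _ => 1) = 0 ∧
    H * A = A * H ∧
    (∀ x : Fin n → ℝ,
      (A.mulVec x) ⬝ᵥ M.mulVec (A.mulVec x) ≤ x ⬝ᵥ M.mulVec x) ∧
    M.IsSymm ∧ M.PosSemidef ∧ M.rank = n - 1 := by
  intro D H M
  -- H applied to a vector
  have hHmul : ∀ x : Fin n → ℝ, H.mulVec x = fun i => x i - ∑ j, π j * x j := by
    intro x
    funext i
    have hH : ∀ j, H i j = (if i = j then 1 else 0) - π j := fun j => by
      simp [H, Matrix.one_apply]
    simp only [Matrix.mulVec, dotProduct, hH, sub_mul, Finset.sum_sub_distrib,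
      ite_mul, one_mul, zero_mul, Finset.sum_ite_eq, Finset.mem_univ, if_true]
  -- quadratic form of M
  have hq : ∀ x : Fin n → ℝ,
      x ⬝ᵥ M.mulVec x = ∑ i, π i * (x i - ∑ j, π j * x j) ^ 2 := by
    intro x
    have h1 : M.mulVec x = Hᵀ.mulVec (D.mulVec (H.mulVec x)) := by
      simp [M, ← Matrix.mulVec_mulVec]
    rw [h1, Matrix.dotProduct_mulVec, Matrix.vecMul_transpose, hHmul]
    simp [D, Matrix.mulVec_diagonal, dotProduct]
    exact Finset.sum_congr rfl fun i _ => by ring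
  -- key rewriting of the quadratic form
  have hkey : ∀ x : Fin n → ℝ,
      ∑ i, π i * (x i - ∑ j, π j * x j) ^ 2
        = (∑ i, π i * (x i) ^ 2) - (∑ j, π j * x j) ^ 2 := by
    intro x
    have : ∀ i : Fin n, π i * (x i - ∑ j, π j * x j) ^ 2
        = π i * (x i) ^ 2 - 2 * (∑ j, π j * x j) * (π i * x i)
          + (∑ j, π j * x j) ^ 2 * π i := fun i => by ring
    rw [Finset.sum_congr rfl fun i _ => this i]
    rw [Finset.sum_add_distrib, Finset.sum_sub_distrib, ← Finset.mul_sum, ← Finset.mul_sum,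
      hπ1]
    ring
  -- part (i)
  have hHone : H.mulVec (fun _ => 1) = 0 := by
    rw [hHmul]; funext i; simp [hπ1]
  have part1 : M.mulVec (fun _ => 1) = 0 := by
    have : M.mulVec (fun _ => 1) = (Hᵀ * D).mulVec (H.mulVec (fun _ => 1)) := by
      simp [M, ← Matrix.mulVec_mulVec]
    rw [this, hHone, Matrix.mulVec_zero]
  -- part (ii)
  have part2 : H * A = A * H := by
    have h1 : (Matrix.of (fun _ j => π j) : Matrix (Fin n) (Fin n) ℝ) * A
        = Matrix.of (fun _ j => π j) := by
      ext i j; simp [Matrix.mul_apply, hπA]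
    have h2 : A * (Matrix.of (fun _ j => π j) : Matrix (Fin n) (Fin n) ℝ)
        = Matrix.of (fun _ j => π j) := by
      ext i j
      simp [Matrix.mul_apply, ← Finset.sum_mul, hrow]
    simp [H, Matrix.sub_mul, Matrix.mul_sub, h1, h2]
  -- stationarity of weighted mean
  have hmean : ∀ x : Fin n → ℝ, ∑ j, π j * (A.mulVec x) j = ∑ j, π j * x j := by
    intro x
    simp only [Matrix.mulVec, dotProduct, Finset.mul_sum]
    rw [Finset.sum_comm]
    exact Finset.sum_congr rfl fun j _ => by
      simp only [← mul_assoc]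
      rw [← Finset.sum_mul, hπA]
  -- contraction of the weighted second moment
  have hcontr : ∀ x : Fin n → ℝ,
      ∑ i, π i * ((A.mulVec x) i) ^ 2 ≤ ∑ i, π i * (x i) ^ 2 := by
    intro x
    have step1 : ∀ i : Fin n, ((A.mulVec x) i) ^ 2 ≤ ∑ j, A i j * (x j) ^ 2 := by
      intro i
      have := Finset.sum_sq_le_sum_mul_sum_of_sq_eq_mul (Finset.univ : Finset (Fin n))
        (r := fun j => A i j * x j) (f := fun j => A i j)
        (g := fun j => A i j * (x j) ^ 2)
        (fun j _ => hnonneg i j)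
        (fun j _ => mul_nonneg (hnonneg i j) (sq_nonneg _))
        (fun j _ => by ring)
      calc ((A.mulVec x) i) ^ 2 = (∑ j, A i j * x j) ^ 2 := by
            simp [Matrix.mulVec, dotProduct]
        _ ≤ (∑ j, A i j) * ∑ j, A i j * (x j) ^ 2 := this
        _ = ∑ j, A i j * (x j) ^ 2 := by rw [hrow, one_mul]
    calc ∑ i, π i * ((A.mulVec x) i) ^ 2
        ≤ ∑ i, π i * ∑ j, A i j * (x j) ^ 2 := by
          exact Finset.sum_le_sum fun i _ =>
            mul_le_mul_of_nonneg_left (step1 i) (hπ i).le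
      _ = ∑ j, (∑ i, π i * A i j) * (x j) ^ 2 := by
          simp only [Finset.mul_sum, Finset.sum_mul]
          rw [Finset.sum_comm]
          exact Finset.sum_congr rfl fun j _ => Finset.sum_congr rfl fun i _ => by ring
      _ = ∑ j, π j * (x j) ^ 2 := by
          exact Finset.sum_congr rfl fun j _ => by rw [hπA]
  -- part (iii)
  have part3 : ∀ x : Fin n → ℝ,
      (A.mulVec x) ⬝ᵥ M.mulVec (A.mulVec x) ≤ x ⬝ᵥ M.mulVec x := by
    intro x
    rw [hq, hq, hkey, hkey, hmean]
    exact sub_le_sub_right (hcontr x) _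
  -- symmetry
  have part4 : M.IsSymm := by
    show Mᵀ = M
    simp [M, D, Matrix.transpose_mul, Matrix.diagonal_transpose, Matrix.mul_assoc]
  -- positive semidefiniteness
  have part5 : M.PosSemidef := by
    refine .of_dotProduct_mulVec_nonneg ?_ ?_
    · rw [Matrix.IsHermitian, Matrix.conjTranspose_eq_transpose_of_trivial]
      exact part4
    · intro x
      show (0:ℝ) ≤ star x ⬝ᵥ M.mulVec x
      have hsx : star x = x := rfl
      rw [hsx, hq]
      exact Finset.sum_nonneg fun i _ => mul_nonneg (hπ i).le (sq_nonneg _)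
  refine ⟨part1, part2, part3, part4, part5, ?_⟩
  -- rank
  have hn : 0 < n := by
    rcases Nat.eq_zero_or_pos n with h | h
    · subst h; simp at hπ1
    · exact h
  have hone_ne : (fun _ => (1:ℝ) : Fin n → ℝ) ≠ 0 := by
    intro h
    have := congrFun h ⟨0, hn⟩
    simp at this
  have hker : LinearMap.ker M.mulVecLin
      = Submodule.span ℝ {(fun _ => (1:ℝ) : Fin n → ℝ)} := by
    apply le_antisymm
    · intro x hx
      have hx0 : M.mulVec x = 0 := hx
      have hq0 : ∑ i, π i * (x i - ∑ j, π j * x j) ^ 2 = 0 := by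
        rw [← hq, hx0, dotProduct_zero]
      have hz : ∀ i ∈ (Finset.univ : Finset (Fin n)),
          π i * (x i - ∑ j, π j * x j) ^ 2 = 0 :=
        (Finset.sum_eq_zero_iff_of_nonneg
          (fun i _ => mul_nonneg (hπ i).le (sq_nonneg _))).mp hq0
      have hc : ∀ i : Fin n, x i = ∑ j, π j * x j := by
        intro i
        have := hz i (Finset.mem_univ i)
        have h2 : (x i - ∑ j, π j * x j) ^ 2 = 0 := by
          rcases mul_eq_zero.mp this with h | h
          · exact absurd h (hπ i).ne'
          · exact h
        have := pow_eq_zero_iff (n := 2) (by norm_num) |>.mp h2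
        linarith [this]
      have : x = (∑ j, π j * x j) • (fun _ => (1:ℝ)) := by
        funext i; simp [hc i]
      rw [this]
      exact Submodule.smul_mem _ _ (Submodule.mem_span_singleton_self _)
    · rw [Submodule.span_le, Set.singleton_subset_iff]
      exact part1
  have hrank : M.rank + 1 = n := by
    have := LinearMap.finrank_range_add_finrank_ker M.mulVecLin
    rw [hker, finrank_span_singleton hone_ne] at this
    simpa [Matrix.rank] using this
  omega
end
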